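/- Structure of the two-dimensional braid image: let t^{1/2} ∈ ℂ* be a root of unity, t = (t^{1/2})², and let G ⊆ GL₂(ℂ) be the subgroup generated by the matrices X = [[0, t⁻¹],[1, 0]], Y = [[t^{1/2}, 0],[0, −t^{1/2}]], and T = t^{1/2}·I₂. Then G is finite; the set of scalar matrices contained in G is exactly the subgroup generated by −I₂ and t^{1/2}·I₂; this set of scalar matrices equals the center of G; the quotient of G by its center is isomorphic to (ℤ/2ℤ) × (ℤ/2ℤ); and consequently the order of G equals 4 times the order of the subgroup of ℂ* generated by −1 and t^{1/2}. -/

import Mathlib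

open Matrix

private noncomputable def sigmaM : ℂˣ →* (Matrix (Fin 2) (Fin 2) ℂ)ˣ :=
  Units.map (algebraMap ℂ (Matrix (Fin 2) (Fin 2) ℂ)).toMonoidHom

private lemma sigmaM_val (u : ℂˣ) :
    ((sigmaM u : (Matrix (Fin 2) (Fin 2) ℂ)ˣ) : Matrix (Fin 2) (Fin 2) ℂ)
      = (u : ℂ) • 1 := by
  simp [sigmaM, Units.coe_map, Algebra.algebraMap_eq_smul_one]

private lemma sigmaM_inj : Function.Injective sigmaM := by
  apply Units.map_injective
  intro a b h
  have h2 := congrFun (congrFun h 0) 0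
  simpa [Algebra.algebraMap_eq_smul_one, Matrix.one_apply] using h2

private lemma sigmaM_neg_one : sigmaM (-1) = -1 :=
  Units.ext (by rw [sigmaM_val]; simp)

/-- Structure of the two-dimensional braid image: for a root of unity
`t^{1/2} ∈ ℂ*`, the subgroup `G` of `GL₂(ℂ)` generated by
`X = [[0, t⁻¹],[1, 0]]`, `Y = diag(t^{1/2}, −t^{1/2})`, `T = t^{1/2}·I₂` is
finite; its scalar matrices form exactly the subgroup generated by `−I₂` and
`t^{1/2}·I₂ (= T)`, which is the center of `G`; `G` modulo its center is
`(ℤ/2) × (ℤ/2)`; and `|G| = 4·|⟨−1, t^{1/2}⟩|`. -/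
theorem stmt9 (t2 : ℂˣ) (hroot : ∃ n : ℕ, 0 < n ∧ t2 ^ n = 1)
    (Xu Yu Tu : (Matrix (Fin 2) (Fin 2) ℂ)ˣ)
    (hX : (Xu : Matrix (Fin 2) (Fin 2) ℂ) = !![0, (((t2 : ℂ)) ^ 2)⁻¹; 1, 0])
    (hY : (Yu : Matrix (Fin 2) (Fin 2) ℂ) = !![(t2 : ℂ), 0; 0, -(t2 : ℂ)])
    (hT : (Tu : Matrix (Fin 2) (Fin 2) ℂ) = (t2 : ℂ) • (1 : Matrix (Fin 2) (Fin 2) ℂ))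
    (G : Subgroup (Matrix (Fin 2) (Fin 2) ℂ)ˣ)
    (hG : G = Subgroup.closure {Xu, Yu, Tu}) :
    -- G is finite
    (G : Set (Matrix (Fin 2) (Fin 2) ℂ)ˣ).Finite ∧
    -- the scalar matrices in G form exactly the subgroup generated by −I₂ and t^{1/2}·I₂
    {g : (Matrix (Fin 2) (Fin 2) ℂ)ˣ | g ∈ G ∧
        ∃ c : ℂ, (g : Matrix (Fin 2) (Fin 2) ℂ) = c • (1 : Matrix (Fin 2) (Fin 2) ℂ)} =
      (Subgroup.closure ({-1, Tu} : Set (Matrix (Fin 2) (Fin 2) ℂ)ˣ) :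
        Set (Matrix (Fin 2) (Fin 2) ℂ)ˣ) ∧
    -- the scalar matrices in G are exactly the central elements of G
    (∀ g ∈ G, (∃ c : ℂ, (g : Matrix (Fin 2) (Fin 2) ℂ) = c • (1 : Matrix (Fin 2) (Fin 2) ℂ)) ↔
      ∀ h ∈ G, g * h = h * g) ∧
    -- G modulo its center is (ℤ/2) × (ℤ/2)
    Nonempty ((↥G ⧸ Subgroup.center ↥G) ≃* Multiplicative (ZMod 2 × ZMod 2)) ∧
    -- |G| = 4 · |subgroup of ℂ* generated by −1 and t^{1/2}|
    Nat.card ↥G = 4 * Nat.card ↥(Subgroup.closure ({-1, t2} : Set ℂˣ)) := by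
  classical
  obtain ⟨n, hn0, htn⟩ := hroot
  have hq0 : (t2 : ℂ) ≠ 0 := Units.ne_zero t2
  set q : ℂ := (t2 : ℂ) with hqdef
  set Z : Subgroup (Matrix (Fin 2) (Fin 2) ℂ)ˣ := Subgroup.closure {-1, Tu} with hZdef
  set C : Subgroup ℂˣ := Subgroup.closure {-1, t2} with hCdef
  -- σ basics
  have hσt2 : sigmaM t2 = Tu := Units.ext (by rw [sigmaM_val, hT])
  have hZmap : Z = Subgroup.map sigmaM C := by
    rw [hZdef, hCdef, MonoidHom.map_closure, Set.image_pair, sigmaM_neg_one, hσt2]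
  have hZsc : ∀ z ∈ Z, ∃ u : ℂˣ, u ∈ C ∧ z = sigmaM u := by
    intro z hz
    rw [hZmap] at hz
    obtain ⟨u, hu, h⟩ := Subgroup.mem_map.mp hz
    exact ⟨u, hu, h.symm⟩
  -- T is central
  have hTc : ∀ g : (Matrix (Fin 2) (Fin 2) ℂ)ˣ, Tu * g = g * Tu := fun g =>
    Units.ext (by rw [Units.val_mul, Units.val_mul, hT, smul_mul_assoc, one_mul,
      mul_smul_comm, mul_one])
  have hZc : ∀ z ∈ Z, ∀ g : (Matrix (Fin 2) (Fin 2) ℂ)ˣ, z * g = g * z := by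
    have hle : Z ≤ Subgroup.center (Matrix (Fin 2) (Fin 2) ℂ)ˣ := by
      rw [hZdef]
      refine (Subgroup.closure_le _).mpr ?_
      rintro x hx
      simp only [Set.mem_insert_iff, Set.mem_singleton_iff] at hx
      rcases hx with rfl | rfl
      · exact Subgroup.mem_center_iff.mpr fun g => by simp
      · exact Subgroup.mem_center_iff.mpr fun g => (hTc g).symm
    intro z hz g
    exact (Subgroup.mem_center_iff.mp (hle hz) g).symm
  -- matrix of XY
  have hXYv : ((Xu * Yu : (Matrix (Fin 2) (Fin 2) ℂ)ˣ) : Matrix (Fin 2) (Fin 2) ℂ)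
      = !![0, -q⁻¹; q, 0] := by
    rw [Units.val_mul, hX, hY]
    ext i j
    fin_cases i <;> fin_cases j <;>
      simp [Matrix.mul_apply, Fin.sum_univ_two] <;> field_simp <;> ring
  -- unit relations
  have hXX : Xu * Xu = (Tu * Tu)⁻¹ := by
    refine eq_inv_of_mul_eq_one_right (Units.ext ?_)
    rw [Units.val_mul, Units.val_mul, Units.val_mul, Units.val_one, hX, hT]
    ext i j
    fin_cases i <;> fin_cases j <;>
      simp [Matrix.mul_apply, Fin.sum_univ_two, Matrix.one_apply] <;> field_simp <;> ring
  have hYY : Yu * Yu = Tu * Tu := by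
    refine Units.ext ?_
    rw [Units.val_mul, Units.val_mul, hY, hT]
    ext i j
    fin_cases i <;> fin_cases j <;>
      simp [Matrix.mul_apply, Fin.sum_univ_two, Matrix.one_apply] <;> ring
  have hYX : Yu * Xu = -(Xu * Yu) := by
    refine Units.ext ?_
    rw [Units.val_mul, Units.val_neg, hXYv, hY, hX]
    ext i j
    fin_cases i <;> fin_cases j <;>
      simp [Matrix.mul_apply, Fin.sum_univ_two] <;> field_simp <;> ring
  have hXY2 : (Xu * Yu) * (Xu * Yu) = -1 := by
    refine Units.ext ?_
    rw [Units.val_mul, hXYv, Units.val_neg, Units.val_one]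
    ext i j
    fin_cases i <;> fin_cases j <;>
      simp [Matrix.mul_apply, Fin.sum_univ_two, Matrix.one_apply] <;> field_simp <;> ring
  -- memberships in G
  have hXuG : Xu ∈ G := by rw [hG]; exact Subgroup.subset_closure (by simp)
  have hYuG : Yu ∈ G := by rw [hG]; exact Subgroup.subset_closure (by simp)
  have hTuG : Tu ∈ G := by rw [hG]; exact Subgroup.subset_closure (by simp)
  have hXYG : Xu * Yu ∈ G := mul_mem hXuG hYuG
  have hneg1G : (-1 : (Matrix (Fin 2) (Fin 2) ℂ)ˣ) ∈ G := by
    rw [← hXY2]; exact mul_mem hXYG hXYG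
  have hZG : Z ≤ G := by
    rw [hZdef]
    refine (Subgroup.closure_le _).mpr ?_
    rintro x hx
    simp only [Set.mem_insert_iff, Set.mem_singleton_iff] at hx
    rcases hx with rfl | rfl
    exacts [hneg1G, hTuG]
  -- memberships in Z
  have hTuZ : Tu ∈ Z := by rw [hZdef]; exact Subgroup.subset_closure (by simp)
  have hneg1Z : (-1 : (Matrix (Fin 2) (Fin 2) ℂ)ˣ) ∈ Z := by
    rw [hZdef]; exact Subgroup.subset_closure (by simp)
  have hTT : Tu * Tu ∈ Z := mul_mem hTuZ hTuZ
  have hTTinv : (Tu * Tu)⁻¹ ∈ Z := inv_mem hTT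
  -- XY does not commute with YX
  have hq2 : ∀ a : ℂ, a ≠ 0 → ¬ (a = -a) := by
    intro a ha h
    have h2 : (2 : ℂ) * a = 0 := by linear_combination h
    rcases mul_eq_zero.mp h2 with h' | h'
    · norm_num at h'
    · exact ha h'
  have hXYne : Xu * Yu ≠ Yu * Xu := by
    intro h
    rw [hYX] at h
    have h' := congrArg (fun u : (Matrix (Fin 2) (Fin 2) ℂ)ˣ =>
      (u : Matrix (Fin 2) (Fin 2) ℂ) 1 0) h
    simp only [Units.val_neg, hXYv] at h'
    exact hq2 q hq0 h'
  -- the coset decomposition predicate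
  set P : (Matrix (Fin 2) (Fin 2) ℂ)ˣ → Prop := fun g =>
    ∃ z ∈ Z, g = z ∨ g = z * Xu ∨ g = z * Yu ∨ g = z * (Xu * Yu) with hPdef
  have hPz : ∀ g, P g → ∀ z ∈ Z, P (g * z) := by
    intro g hg z hz
    simp only [hPdef] at hg ⊢
    obtain ⟨z₁, hz₁, hc⟩ := hg
    refine ⟨z₁ * z, mul_mem hz₁ hz, ?_⟩
    rcases hc with h | h | h | h <;> rw [h]
    · exact Or.inl rfl
    · exact Or.inr (Or.inl (by rw [mul_assoc, ← hZc z hz Xu, ← mul_assoc]))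
    · exact Or.inr (Or.inr (Or.inl (by rw [mul_assoc, ← hZc z hz Yu, ← mul_assoc])))
    · exact Or.inr (Or.inr (Or.inr (by rw [mul_assoc, ← hZc z hz (Xu * Yu), ← mul_assoc])))
  have hPX : ∀ g, P g → P (g * Xu) := by
    intro g hg
    simp only [hPdef] at hg ⊢
    obtain ⟨z, hz, hc⟩ := hg
    rcases hc with h | h | h | h <;> rw [h]
    · exact ⟨z, hz, Or.inr (Or.inl rfl)⟩
    · exact ⟨z * (Tu * Tu)⁻¹, mul_mem hz hTTinv, Or.inl (by rw [mul_assoc, hXX])⟩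
    · refine ⟨z * (-1), mul_mem hz hneg1Z, Or.inr (Or.inr (Or.inr ?_))⟩
      rw [mul_assoc, hYX, mul_neg, mul_neg_one, neg_mul]
    · refine ⟨z * (-(Tu * Tu)⁻¹), mul_mem hz (by rw [← neg_one_mul]; exact mul_mem hneg1Z hTTinv),
        Or.inr (Or.inr (Or.inl ?_))⟩
      have h1 : (Xu * Yu) * Xu = (-(Tu * Tu)⁻¹) * Yu := by
        calc (Xu * Yu) * Xu = Xu * (Yu * Xu) := by rw [mul_assoc]
        _ = Xu * (-(Xu * Yu)) := by rw [hYX]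
        _ = -(Xu * Xu * Yu) := by rw [mul_neg, ← mul_assoc]
        _ = (-(Tu * Tu)⁻¹) * Yu := by rw [hXX, neg_mul]
      rw [mul_assoc, h1, ← mul_assoc]
  have hPY : ∀ g, P g → P (g * Yu) := by
    intro g hg
    simp only [hPdef] at hg ⊢
    obtain ⟨z, hz, hc⟩ := hg
    rcases hc with h | h | h | h <;> rw [h]
    · exact ⟨z, hz, Or.inr (Or.inr (Or.inl rfl))⟩
    · exact ⟨z, hz, Or.inr (Or.inr (Or.inr (by rw [mul_assoc])))⟩
    · exact ⟨z * (Tu * Tu), mul_mem hz hTT, Or.inl (by rw [mul_assoc, hYY])⟩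
    · refine ⟨z * (Tu * Tu), mul_mem hz hTT, Or.inr (Or.inl ?_)⟩
      have h1 : (Xu * Yu) * Yu = (Tu * Tu) * Xu := by
        calc (Xu * Yu) * Yu = Xu * (Yu * Yu) := by rw [mul_assoc]
        _ = Xu * (Tu * Tu) := by rw [hYY]
        _ = (Tu * Tu) * Xu := (hZc _ hTT Xu).symm.trans rfl
      rw [mul_assoc, h1, ← mul_assoc]
  have hPinv : ∀ g, P g → P g⁻¹ := by
    intro g hg
    simp only [hPdef] at hg ⊢
    obtain ⟨z, hz, hc⟩ := hg
    have hXinv : Xu⁻¹ = (Tu * Tu) * Xu := by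
      refine inv_eq_of_mul_eq_one_right ?_
      calc Xu * ((Tu * Tu) * Xu) = (Xu * (Tu * Tu)) * Xu := (mul_assoc _ _ _).symm
      _ = ((Tu * Tu) * Xu) * Xu := by rw [← hZc _ hTT Xu]
      _ = (Tu * Tu) * (Xu * Xu) := mul_assoc _ _ _
      _ = 1 := by rw [hXX, mul_inv_cancel]
    have hYinv : Yu⁻¹ = (Tu * Tu)⁻¹ * Yu := by
      refine inv_eq_of_mul_eq_one_right ?_
      calc Yu * ((Tu * Tu)⁻¹ * Yu) = (Yu * (Tu * Tu)⁻¹) * Yu := (mul_assoc _ _ _).symm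
      _ = ((Tu * Tu)⁻¹ * Yu) * Yu := by rw [← hZc _ hTTinv Yu]
      _ = (Tu * Tu)⁻¹ * (Yu * Yu) := mul_assoc _ _ _
      _ = 1 := by rw [hYY, inv_mul_cancel]
    have hXYinv : (Xu * Yu)⁻¹ = (-1) * (Xu * Yu) := by
      refine inv_eq_of_mul_eq_one_right ?_
      calc (Xu * Yu) * ((-1) * (Xu * Yu)) = (-1) * ((Xu * Yu) * (Xu * Yu)) := by
            rw [← mul_assoc, ← hZc _ hneg1Z (Xu * Yu), mul_assoc]
      _ = 1 := by rw [hXY2]; simp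
    rcases hc with h | h | h | h <;> rw [h]
    · exact ⟨z⁻¹, inv_mem hz, Or.inl rfl⟩
    · refine ⟨z⁻¹ * (Tu * Tu), mul_mem (inv_mem hz) hTT, Or.inr (Or.inl ?_)⟩
      calc (z * Xu)⁻¹ = Xu⁻¹ * z⁻¹ := _root_.mul_inv_rev _ _
      _ = ((Tu * Tu) * Xu) * z⁻¹ := by rw [hXinv]
      _ = (Tu * Tu) * (Xu * z⁻¹) := mul_assoc _ _ _
      _ = (Tu * Tu) * (z⁻¹ * Xu) := by rw [← hZc _ (inv_mem hz) Xu]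
      _ = ((Tu * Tu) * z⁻¹) * Xu := (mul_assoc _ _ _).symm
      _ = (z⁻¹ * (Tu * Tu)) * Xu := by rw [hZc _ hTT z⁻¹]
    · refine ⟨z⁻¹ * (Tu * Tu)⁻¹, mul_mem (inv_mem hz) hTTinv, Or.inr (Or.inr (Or.inl ?_))⟩
      calc (z * Yu)⁻¹ = Yu⁻¹ * z⁻¹ := _root_.mul_inv_rev _ _
      _ = ((Tu * Tu)⁻¹ * Yu) * z⁻¹ := by rw [hYinv]
      _ = (Tu * Tu)⁻¹ * (Yu * z⁻¹) := mul_assoc _ _ _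
      _ = (Tu * Tu)⁻¹ * (z⁻¹ * Yu) := by rw [← hZc _ (inv_mem hz) Yu]
      _ = ((Tu * Tu)⁻¹ * z⁻¹) * Yu := (mul_assoc _ _ _).symm
      _ = (z⁻¹ * (Tu * Tu)⁻¹) * Yu := by rw [hZc _ hTTinv z⁻¹]
    · refine ⟨z⁻¹ * (-1), mul_mem (inv_mem hz) hneg1Z, Or.inr (Or.inr (Or.inr ?_))⟩
      calc (z * (Xu * Yu))⁻¹ = (Xu * Yu)⁻¹ * z⁻¹ := _root_.mul_inv_rev _ _
      _ = ((-1) * (Xu * Yu)) * z⁻¹ := by rw [hXYinv]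
      _ = (-1) * ((Xu * Yu) * z⁻¹) := mul_assoc _ _ _
      _ = (-1) * (z⁻¹ * (Xu * Yu)) := by rw [← hZc _ (inv_mem hz) (Xu * Yu)]
      _ = ((-1) * z⁻¹) * (Xu * Yu) := (mul_assoc _ _ _).symm
      _ = (z⁻¹ * (-1)) * (Xu * Yu) := by rw [hZc _ hneg1Z z⁻¹]
  have hGP : ∀ g ∈ G, P g := by
    intro g hg
    rw [hG] at hg
    refine Subgroup.closure_induction ?_ ?_ ?_ ?_ hg
    · rintro x hx
      simp only [Set.mem_insert_iff, Set.mem_singleton_iff] at hx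
      rcases hx with h | h | h <;> rw [h]
      · exact ⟨1, one_mem Z, Or.inr (Or.inl (one_mul _).symm)⟩
      · exact ⟨1, one_mem Z, Or.inr (Or.inr (Or.inl (one_mul _).symm))⟩
      · exact ⟨Tu, hTuZ, Or.inl rfl⟩
    · exact ⟨1, one_mem Z, Or.inl rfl⟩
    · intro x y _ _ px py
      simp only [hPdef] at py
      obtain ⟨z₂, hz₂, hc⟩ := py
      rcases hc with h | h | h | h <;> rw [h]
      · exact hPz x px z₂ hz₂
      · rw [← mul_assoc]; exact hPX _ (hPz x px z₂ hz₂)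
      · rw [← mul_assoc]; exact hPY _ (hPz x px z₂ hz₂)
      · rw [show x * (z₂ * (Xu * Yu)) = ((x * z₂) * Xu) * Yu by group]
        exact hPY _ (hPX _ (hPz x px z₂ hz₂))
    · exact fun x _ px => hPinv x px
  -- scalars commute with everything
  have hscal_comm : ∀ (g h : (Matrix (Fin 2) (Fin 2) ℂ)ˣ) (c : ℂ),
      (g : Matrix (Fin 2) (Fin 2) ℂ) = c • 1 → g * h = h * g := by
    intro g h c hc
    refine Units.ext ?_
    rw [Units.val_mul, Units.val_mul, hc, smul_mul_assoc, one_mul, mul_smul_comm, mul_one]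
  -- a scalar element of G lies in Z
  have hscal_to_Z : ∀ g ∈ G,
      (∃ c : ℂ, (g : Matrix (Fin 2) (Fin 2) ℂ) = c • 1) → g ∈ Z := by
    rintro g hg ⟨c, hc⟩
    obtain ⟨z, hz, hcase⟩ := hGP g hg
    obtain ⟨u, huC, hu⟩ := hZsc z hz
    rcases hcase with h | h | h | h
    · rw [h]; exact hz
    · exfalso
      have hm : (u : ℂ) • (Xu : Matrix (Fin 2) (Fin 2) ℂ) = c • 1 := by
        rw [← hc, h, Units.val_mul, hu, sigmaM_val, smul_mul_assoc, one_mul]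
      have h10 := congrFun (congrFun hm 1) 0
      simp [hX, Matrix.one_apply] at h10
    · exfalso
      have hm : (u : ℂ) • (Yu : Matrix (Fin 2) (Fin 2) ℂ) = c • 1 := by
        rw [← hc, h, Units.val_mul, hu, sigmaM_val, smul_mul_assoc, one_mul]
      have h00 := congrFun (congrFun hm 0) 0
      have h11 := congrFun (congrFun hm 1) 1
      simp [hY, Matrix.one_apply] at h00 h11
      exact hq2 _ (mul_ne_zero (Units.ne_zero u) hq0) (h00.trans h11.symm)
    · exfalso
      have hm := hc
      rw [h, Units.val_mul, hu, sigmaM_val, smul_mul_assoc, one_mul] at hm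
      have h10 := congrFun (congrFun hm 1) 0
      simp [hXYv, Matrix.one_apply] at h10
      exact hq0 h10
  -- an element of G commuting with all of G is a scalar
  have hcomm_to_scal : ∀ g ∈ G, (∀ h ∈ G, g * h = h * g) → ∃ u : ℂˣ, g = sigmaM u := by
    intro g hg hcomm
    obtain ⟨z, hz, hcase⟩ := hGP g hg
    obtain ⟨u, huC, hu⟩ := hZsc z hz
    rcases hcase with h | h | h | h
    · exact ⟨u, by rw [h, hu]⟩
    · exfalso
      have hcY := hcomm Yu hYuG
      rw [h] at hcY
      have key : z * (Xu * Yu) = z * (Yu * Xu) := by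
        calc z * (Xu * Yu) = (z * Xu) * Yu := (mul_assoc _ _ _).symm
        _ = Yu * (z * Xu) := hcY
        _ = (Yu * z) * Xu := (mul_assoc _ _ _).symm
        _ = (z * Yu) * Xu := by rw [← hZc _ hz Yu]
        _ = z * (Yu * Xu) := mul_assoc _ _ _
      exact hXYne (mul_left_cancel key)
    · exfalso
      have hcX := hcomm Xu hXuG
      rw [h] at hcX
      have key : z * (Yu * Xu) = z * (Xu * Yu) := by
        calc z * (Yu * Xu) = (z * Yu) * Xu := (mul_assoc _ _ _).symm
        _ = Xu * (z * Yu) := hcX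
        _ = (Xu * z) * Yu := (mul_assoc _ _ _).symm
        _ = (z * Xu) * Yu := by rw [← hZc _ hz Xu]
        _ = z * (Xu * Yu) := mul_assoc _ _ _
      exact hXYne (mul_left_cancel key).symm
    · exfalso
      have hcY := hcomm Yu hYuG
      rw [h] at hcY
      have key : z * ((Xu * Yu) * Yu) = z * ((Yu * Xu) * Yu) := by
        calc z * ((Xu * Yu) * Yu) = (z * (Xu * Yu)) * Yu := (mul_assoc _ _ _).symm
        _ = Yu * (z * (Xu * Yu)) := hcY
        _ = (Yu * z) * (Xu * Yu) := (mul_assoc _ _ _).symm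
        _ = (z * Yu) * (Xu * Yu) := by rw [← hZc _ hz Yu]
        _ = z * (Yu * (Xu * Yu)) := mul_assoc _ _ _
        _ = z * ((Yu * Xu) * Yu) := by rw [← mul_assoc Yu Xu Yu]
      exact hXYne (mul_right_cancel (mul_left_cancel key))
  -- distinctness lemmas
  have hshift : ∀ (u₁ u₂ : ℂˣ) (a b : (Matrix (Fin 2) (Fin 2) ℂ)ˣ),
      sigmaM u₁ * a = sigmaM u₂ * b → a = sigmaM (u₁⁻¹ * u₂) * b := by
    intro u₁ u₂ a b hh
    rw [_root_.map_mul, _root_.map_inv]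
    calc a = (sigmaM u₁)⁻¹ * (sigmaM u₁ * a) := by rw [inv_mul_cancel_left]
    _ = (sigmaM u₁)⁻¹ * (sigmaM u₂ * b) := by rw [hh]
    _ = (sigmaM u₁)⁻¹ * sigmaM u₂ * b := (mul_assoc _ _ _).symm
  have hN1 : ∀ u : ℂˣ, Xu ≠ sigmaM u := by
    intro u hcon
    have hc := congrArg (Units.val) hcon
    rw [hX, sigmaM_val] at hc
    have h10 := congrFun (congrFun hc 1) 0
    simp [Matrix.one_apply] at h10
  have hN2 : ∀ u : ℂˣ, Yu ≠ sigmaM u := by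
    intro u hcon
    have hc := congrArg (Units.val) hcon
    rw [hY, sigmaM_val] at hc
    have h00 := congrFun (congrFun hc 0) 0
    have h11 := congrFun (congrFun hc 1) 1
    simp [Matrix.one_apply] at h00 h11
    exact hq2 q hq0 (h00.trans h11.symm)
  have hN3 : ∀ u : ℂˣ, Xu * Yu ≠ sigmaM u := by
    intro u hcon
    have hc := congrArg (Units.val) hcon
    rw [hXYv, sigmaM_val] at hc
    have h10 := congrFun (congrFun hc 1) 0
    simp [Matrix.one_apply] at h10
    exact hq0 h10
  have hN4 : ∀ u : ℂˣ, Yu ≠ sigmaM u * Xu := by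
    intro u hcon
    have hc := congrArg (Units.val) hcon
    rw [hY, Units.val_mul, sigmaM_val, smul_mul_assoc, one_mul, hX] at hc
    have h00 := congrFun (congrFun hc 0) 0
    simp at h00
    exact hq0 h00
  have hN5 : ∀ u : ℂˣ, Xu * Yu ≠ sigmaM u * Xu := by
    intro u hcon
    have hc := congrArg (Units.val) hcon
    rw [hXYv, Units.val_mul, sigmaM_val, smul_mul_assoc, one_mul, hX] at hc
    have h10 := congrFun (congrFun hc 1) 0
    have h01 := congrFun (congrFun hc 0) 1
    simp at h10 h01
    rw [← h10] at h01
    field_simp at h01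
    exact hq2 (q * q) (mul_ne_zero hq0 hq0) (by linear_combination (-(q * q)) * h01)
  have hN6 : ∀ u : ℂˣ, Xu * Yu ≠ sigmaM u * Yu := by
    intro u hcon
    have hc := congrArg (Units.val) hcon
    rw [hXYv, Units.val_mul, sigmaM_val, smul_mul_assoc, one_mul, hY] at hc
    have h00 := congrFun (congrFun hc 0) 0
    simp at h00
    exact hq0 h00
  -- the four coset representatives
  set w4 : Fin 4 → (Matrix (Fin 2) (Fin 2) ℂ)ˣ := ![1, Xu, Yu, Xu * Yu] with hw4
  have hw4G : ∀ i, w4 i ∈ G := by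
    intro i
    fin_cases i
    · exact one_mem G
    · exact hXuG
    · exact hYuG
    · exact hXYG
  -- the counting bijection
  set f : Fin 4 × ↥Z → ↥G :=
    fun p => ⟨(p.2 : (Matrix (Fin 2) (Fin 2) ℂ)ˣ) * w4 p.1,
      mul_mem (hZG p.2.2) (hw4G p.1)⟩ with hf
  have hfsurj : Function.Surjective f := by
    rintro ⟨g, hg⟩
    obtain ⟨z, hz, hcase⟩ := hGP g hg
    rcases hcase with h | h | h | h
    · exact ⟨(0, ⟨z, hz⟩), Subtype.ext (by show z * w4 0 = g; rw [h]; simp [hw4])⟩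
    · exact ⟨(1, ⟨z, hz⟩), Subtype.ext (by show z * w4 1 = g; rw [h]; simp [hw4])⟩
    · exact ⟨(2, ⟨z, hz⟩), Subtype.ext (by show z * w4 2 = g; rw [h]; simp [hw4])⟩
    · exact ⟨(3, ⟨z, hz⟩), Subtype.ext (by show z * w4 3 = g; rw [h]; simp [hw4])⟩
  have hfinj : Function.Injective f := by
    rintro ⟨i, z₁, hz₁⟩ ⟨j, z₂, hz₂⟩ hfeq
    have hval : z₁ * w4 i = z₂ * w4 j := congrArg Subtype.val hfeq
    obtain ⟨u₁, hu₁C, hu₁⟩ := hZsc z₁ hz₁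
    obtain ⟨u₂, hu₂C, hu₂⟩ := hZsc z₂ hz₂
    rw [hu₁, hu₂] at hval
    have hdiag : sigmaM u₁ = sigmaM u₂ → (⟨z₁, hz₁⟩ : ↥Z) = (⟨z₂, hz₂⟩ : ↥Z) := by
      intro hk
      have hu := sigmaM_inj hk
      refine Subtype.ext ?_
      show z₁ = z₂
      rw [hu₁, hu₂, hu]
    fin_cases i <;> fin_cases j <;>
      simp only [hw4, Matrix.cons_val_zero, Matrix.cons_val_one, Matrix.head_cons,
        Matrix.cons_val_two, Matrix.tail_cons, Matrix.cons_val_three] at hval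
    · exact Prod.ext rfl (hdiag (mul_right_cancel hval))
    · exact absurd ((hshift u₂ u₁ Xu 1 hval.symm).trans (mul_one _)) (hN1 _)
    · exact absurd ((hshift u₂ u₁ Yu 1 hval.symm).trans (mul_one _)) (hN2 _)
    · exact absurd ((hshift u₂ u₁ (Xu * Yu) 1 hval.symm).trans (mul_one _)) (hN3 _)
    · exact absurd ((hshift u₁ u₂ Xu 1 hval).trans (mul_one _)) (hN1 _)
    · exact Prod.ext rfl (hdiag (mul_right_cancel hval))
    · exact absurd (hshift u₂ u₁ Yu Xu hval.symm) (hN4 _)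
    · exact absurd (hshift u₂ u₁ (Xu * Yu) Xu hval.symm) (hN5 _)
    · exact absurd ((hshift u₁ u₂ Yu 1 hval).trans (mul_one _)) (hN2 _)
    · exact absurd (hshift u₁ u₂ Yu Xu hval) (hN4 _)
    · exact Prod.ext rfl (hdiag (mul_right_cancel hval))
    · exact absurd (hshift u₂ u₁ (Xu * Yu) Yu hval.symm) (hN6 _)
    · exact absurd ((hshift u₁ u₂ (Xu * Yu) 1 hval).trans (mul_one _)) (hN3 _)
    · exact absurd (hshift u₁ u₂ (Xu * Yu) Xu hval) (hN5 _)
    · exact absurd (hshift u₁ u₂ (Xu * Yu) Yu hval) (hN6 _)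
    · exact Prod.ext rfl (hdiag (mul_right_cancel hval))
  -- cardinalities
  have hZCcard : Nat.card ↥Z = Nat.card ↥C := by
    rw [hZmap]
    exact (Nat.card_congr (Subgroup.equivMapOfInjective C sigmaM sigmaM_inj).toEquiv).symm
  have hGcard : Nat.card ↥G = 4 * Nat.card ↥Z := by
    rw [← Nat.card_eq_of_bijective f ⟨hfinj, hfsurj⟩, Nat.card_prod]
    simp
  -- finiteness
  have hCfin : (C : Set ℂˣ).Finite := by
    haveI : NeZero (n * 2) := ⟨by omega⟩
    have hle : C ≤ rootsOfUnity (n * 2) ℂ := by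
      rw [hCdef]
      refine (Subgroup.closure_le _).mpr ?_
      rintro x hx
      simp only [Set.mem_insert_iff, Set.mem_singleton_iff] at hx
      rcases hx with rfl | rfl
      · rw [SetLike.mem_coe, mem_rootsOfUnity]
        exact Even.neg_one_pow ⟨n, by ring⟩
      · rw [SetLike.mem_coe, mem_rootsOfUnity, pow_mul, htn, one_pow]
    haveI : Finite ↥((rootsOfUnity (n * 2) ℂ : Subgroup ℂˣ) : Set ℂˣ) :=
      inferInstanceAs (Finite ↥(rootsOfUnity (n * 2) ℂ))
    exact Set.Finite.subset (Set.toFinite _) hle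
  have hZfin : (Z : Set (Matrix (Fin 2) (Fin 2) ℂ)ˣ).Finite := by
    rw [hZmap, Subgroup.coe_map]
    exact hCfin.image _
  have hGfin : (G : Set (Matrix (Fin 2) (Fin 2) ℂ)ˣ).Finite := by
    have hbig : ((Z : Set (Matrix (Fin 2) (Fin 2) ℂ)ˣ)
        ∪ ((· * Xu) '' Z) ∪ ((· * Yu) '' Z) ∪ ((· * (Xu * Yu)) '' Z)).Finite :=
      ((hZfin.union (hZfin.image _)).union (hZfin.image _)).union (hZfin.image _)
    refine hbig.subset ?_
    intro g hg
    obtain ⟨z, hz, hcase⟩ := hGP g hg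
    rcases hcase with h | h | h | h
    · exact Or.inl (Or.inl (Or.inl (by rw [h]; exact hz)))
    · exact Or.inl (Or.inl (Or.inr ⟨z, hz, h.symm⟩))
    · exact Or.inl (Or.inr ⟨z, hz, h.symm⟩)
    · exact Or.inr ⟨z, hz, h.symm⟩
  haveI hGfint : Finite ↥G := hGfin.to_subtype
  haveI hZfint : Finite ↥Z := hZfin.to_subtype
  -- the center of G
  have hcent : Subgroup.center ↥G = Z.subgroupOf G := by
    ext g
    rw [Subgroup.mem_center_iff, Subgroup.mem_subgroupOf]
    constructor
    · intro hcc
      refine hscal_to_Z _ g.2 ?_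
      obtain ⟨u, hu⟩ := hcomm_to_scal _ g.2 (fun h hh => (congrArg Subtype.val (hcc ⟨h, hh⟩)).symm)
      exact ⟨u, by rw [hu, sigmaM_val]⟩
    · intro hgZ b
      exact Subtype.ext (hZc _ hgZ _).symm
  have hcentcard : Nat.card ↥(Subgroup.center ↥G) = Nat.card ↥Z := by
    rw [hcent]
    exact Nat.card_congr (Subgroup.subgroupOfEquivOfLe hZG).toEquiv
  have hZpos : 0 < Nat.card ↥Z := by
    haveI : Nonempty ↥Z := ⟨1⟩
    exact Nat.card_pos
  have hq4 : Nat.card (↥G ⧸ Subgroup.center ↥G) = 4 := by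
    have h1 := Subgroup.card_eq_card_quotient_mul_card_subgroup (Subgroup.center ↥G)
    rw [hGcard, hcentcard] at h1
    exact (Nat.eq_of_mul_eq_mul_right hZpos h1.symm)
  have hsq : ∀ g ∈ G, g * g ∈ Z := by
    intro g hg
    obtain ⟨z, hz, hcase⟩ := hGP g hg
    have hgen : ∀ a : (Matrix (Fin 2) (Fin 2) ℂ)ˣ, (z * a) * (z * a) = (z * z) * (a * a) := by
      intro a
      calc (z * a) * (z * a) = z * (a * (z * a)) := mul_assoc _ _ _
      _ = z * ((a * z) * a) := by rw [← mul_assoc a z a]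
      _ = z * ((z * a) * a) := by rw [← hZc z hz a]
      _ = z * (z * (a * a)) := by rw [mul_assoc z a a]
      _ = (z * z) * (a * a) := (mul_assoc _ _ _).symm
    rcases hcase with h | h | h | h <;> rw [h]
    · exact mul_mem hz hz
    · rw [hgen Xu, hXX]; exact mul_mem (mul_mem hz hz) hTTinv
    · rw [hgen Yu, hYY]; exact mul_mem (mul_mem hz hz) hTT
    · rw [hgen (Xu * Yu), hXY2]; exact mul_mem (mul_mem hz hz) hneg1Z
  have hexp2 : ∀ x : ↥G ⧸ Subgroup.center ↥G, x ^ 2 = 1 := by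
    intro x
    refine QuotientGroup.induction_on x fun g => ?_
    rw [pow_two, ← QuotientGroup.mk_mul, QuotientGroup.eq_one_iff]
    rw [hcent, Subgroup.mem_subgroupOf]
    exact hsq _ g.2
  have hexpeq : Monoid.exponent (↥G ⧸ Subgroup.center ↥G) = 2 := by
    have hdvd := Monoid.exponent_dvd_of_forall_pow_eq_one hexp2
    rcases (Nat.dvd_prime Nat.prime_two).mp hdvd with h1 | h2
    · exfalso
      have hall : ∀ x : ↥G ⧸ Subgroup.center ↥G, x = 1 := fun x => by
        have hx := Monoid.pow_exponent_eq_one x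
        rwa [h1, pow_one] at hx
      haveI : Unique (↥G ⧸ Subgroup.center ↥G) := ⟨⟨1⟩, hall⟩
      rw [Nat.card_unique] at hq4
      norm_num at hq4
    · exact h2
  haveI hklein : IsKleinFour (↥G ⧸ Subgroup.center ↥G) := ⟨hq4, hexpeq⟩
  refine ⟨hGfin, ?_, ?_, ?_, ?_⟩
  · ext g
    simp only [Set.mem_setOf_eq, SetLike.mem_coe]
    constructor
    · rintro ⟨hgG, hsc⟩
      exact hscal_to_Z g hgG hsc
    · intro hgZ
      obtain ⟨u, _, hu⟩ := hZsc g hgZ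
      exact ⟨hZG hgZ, u, by rw [hu, sigmaM_val]⟩
  · intro g hgG
    constructor
    · rintro ⟨c, hc⟩ h hh
      exact hscal_comm g h c hc
    · intro hcomm
      obtain ⟨u, hu⟩ := hcomm_to_scal g hgG hcomm
      exact ⟨u, by rw [hu, sigmaM_val]⟩
  · exact IsKleinFour.nonempty_mulEquiv
  · rw [hGcard, hZCcard]
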